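/- Lamport's bakery algorithm for two processes (Example 3) satisfies non-starvation for process 2 under fairness: for every fair event stream es and every position i, if the second component of the trace σ of es under step3 from initial state (T,T,0,0) at position i is W, then there exists j ≥ i such that the second component of σ j is U. -/
import Mathlib


inductive ProcState : Type where
  | T | W | U
deriving DecidableEq

inductive Event : Type where
  | request1 | request2 | take1 | take2 | release1 | release2
deriving DecidableEq

/-- The trace of an event stream under a transition function from an initial state. -/
def trace {S : Type} (step : Event → S → S) (s0 : S) (es : ℕ → Event) : ℕ → S
  | 0 => s0
  | n + 1 => step (es n) (trace step s0 es n)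

/-- An event stream is fair if every event occurs infinitely often. -/
def Fair (es : ℕ → Event) : Prop := ∀ (e : Event) (n : ℕ), ∃ m, n ≤ m ∧ es m = e

/-- Transition function of Example 3 (Lamport's bakery algorithm for two processes).
The state is `(s1, s2, t1, t2)` where `t1`, `t2` are the ticket numbers. -/
def step3 : Event → ProcState × ProcState × ℕ × ℕ → ProcState × ProcState × ℕ × ℕ
  | .request1, (s1, s2, t1, t2) =>
      if s1 = ProcState.T then (.W, s2, t2 + 1, t2) else (s1, s2, t1, t2)
  | .request2, (s1, s2, t1, t2) =>
      if s2 = ProcState.T then (s1, .W, t1, t1 + 1) else (s1, s2, t1, t2)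
  | .take1, (s1, s2, t1, t2) =>
      if s1 = ProcState.W ∧ (s2 = ProcState.T ∨ t1 < t2) then (.U, s2, t1, t2)
      else (s1, s2, t1, t2)
  | .take2, (s1, s2, t1, t2) =>
      if s2 = ProcState.W ∧ (s1 = ProcState.T ∨ t2 < t1) then (s1, .U, t1, t2)
      else (s1, s2, t1, t2)
  | .release1, (s1, s2, t1, t2) =>
      if s1 = ProcState.U then (.T, s2, 0, t2) else (s1, s2, t1, t2)
  | .release2, (s1, s2, t1, t2) =>
      if s2 = ProcState.U then (s1, .T, t1, 0) else (s1, s2, t1, t2)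

namespace BakeryAux

lemma until_event (es : ℕ → Event) (hf : Fair es) (e : Event) (P : ℕ → Prop)
    (n : ℕ) (hP : P n) (hstep : ∀ k, n ≤ k → P k → es k ≠ e → P (k + 1)) :
    ∃ m, n ≤ m ∧ es m = e ∧ P m := by
  classical
  have hex : ∃ m, n ≤ m ∧ es m = e := hf e n
  obtain ⟨hnm, hesm⟩ := Nat.find_spec hex
  refine ⟨Nat.find hex, hnm, hesm, ?_⟩
  have key : ∀ d, n + d ≤ Nat.find hex → P (n + d) := by
    intro d
    induction d with
    | zero => intro _; exact hP
    | succ d ih =>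
      intro hle
      have hd : n + d ≤ Nat.find hex := by omega
      have hlt : n + d < Nat.find hex := by omega
      have hne : es (n + d) ≠ e := by
        intro h
        exact (Nat.find_min hex hlt) ⟨by omega, h⟩
      exact hstep (n + d) (by omega) (ih hd) hne
  obtain ⟨d, hd⟩ := Nat.exists_eq_add_of_le hnm
  have := key d (by omega)
  rw [hd]
  exact this

lemma step3_s2 (e : Event) (s : ProcState × ProcState × ℕ × ℕ)
    (h : s.2.1 = ProcState.W) :
    (step3 e s).2.1 = ProcState.W ∨ (step3 e s).2.1 = ProcState.U := by
  obtain ⟨s1, s2, t1, t2⟩ := s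
  simp only at h
  cases e <;> simp only [step3] <;> split_ifs <;> simp_all

lemma step3_inv (e : Event) (s : ProcState × ProcState × ℕ × ℕ)
    (h : s.1 ≠ ProcState.T → s.2.1 ≠ ProcState.T → s.2.2.1 ≠ s.2.2.2) :
    (step3 e s).1 ≠ ProcState.T → (step3 e s).2.1 ≠ ProcState.T →
      (step3 e s).2.2.1 ≠ (step3 e s).2.2.2 := by
  obtain ⟨s1, s2, t1, t2⟩ := s
  simp only at h
  cases e <;> simp only [step3] <;> split_ifs <;> simp_all <;> omega

lemma step3_U1 (e : Event) (s : ProcState × ProcState × ℕ × ℕ)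
    (h : s.1 = ProcState.U) (hne : e ≠ Event.release1) :
    (step3 e s).1 = ProcState.U := by
  obtain ⟨s1, s2, t1, t2⟩ := s
  simp only at h
  cases e <;> simp only [step3] <;> split_ifs <;> simp_all

lemma step3_release1 (s : ProcState × ProcState × ℕ × ℕ)
    (h : s.1 = ProcState.U) : (step3 Event.release1 s).1 = ProcState.T := by
  obtain ⟨s1, s2, t1, t2⟩ := s
  simp only at h
  simp [step3, h]

lemma step3_frozen (e : Event) (s : ProcState × ProcState × ℕ × ℕ)
    (h1 : s.1 = ProcState.W) (h2 : s.2.1 = ProcState.W) (hne : e ≠ Event.take1) :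
    (step3 e s).1 = ProcState.W ∧ (step3 e s).2.2 = s.2.2 := by
  obtain ⟨s1, s2, t1, t2⟩ := s
  simp only at h1 h2
  cases e <;> simp only [step3] <;> split_ifs <;> simp_all

lemma step3_take1_succ (s : ProcState × ProcState × ℕ × ℕ)
    (h1 : s.1 = ProcState.W) (hlt : s.2.2.1 < s.2.2.2) :
    (step3 Event.take1 s).1 = ProcState.U := by
  obtain ⟨s1, s2, t1, t2⟩ := s
  simp only at h1 hlt
  simp [step3, h1, hlt]

lemma step3_take2_succ (s : ProcState × ProcState × ℕ × ℕ)
    (h2 : s.2.1 = ProcState.W)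
    (hK : s.1 = ProcState.T ∨ s.2.2.2 < s.2.2.1) :
    (step3 Event.take2 s).2.1 = ProcState.U := by
  obtain ⟨s1, s2, t1, t2⟩ := s
  simp only at h2 hK
  simp [step3, h2, hK]

lemma step3_K (e : Event) (s : ProcState × ProcState × ℕ × ℕ)
    (h2 : s.2.1 = ProcState.W)
    (hK : s.1 = ProcState.T ∨ (s.1 = ProcState.W ∧ s.2.2.2 < s.2.2.1))
    (hne : e ≠ Event.take2) :
    (step3 e s).1 = ProcState.T ∨
      ((step3 e s).1 = ProcState.W ∧ (step3 e s).2.2.2 < (step3 e s).2.2.1) := by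
  obtain ⟨s1, s2, t1, t2⟩ := s
  simp only at h2 hK
  cases e <;> simp only [step3] <;> split_ifs <;> simp_all <;> omega

end BakeryAux

/-- Lamport's bakery algorithm (Example 3) satisfies non-starvation for process 2
under fairness. -/
theorem bakery_non_starvation_process2 :
    ∀ es : ℕ → Event, Fair es → ∀ i : ℕ,
      (trace step3 (ProcState.T, ProcState.T, 0, 0) es i).2.1 = ProcState.W →
      ∃ j, i ≤ j ∧
        (trace step3 (ProcState.T, ProcState.T, 0, 0) es j).2.1 = ProcState.U := by
  intro es hf i hWi
  set σ : ℕ → ProcState × ProcState × ℕ × ℕ :=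
    trace step3 (ProcState.T, ProcState.T, 0, 0) es with hσ
  have hsucc : ∀ n, σ (n + 1) = step3 (es n) (σ n) := fun n => rfl
  have inv : ∀ n, (σ n).1 ≠ ProcState.T → (σ n).2.1 ≠ ProcState.T →
      (σ n).2.2.1 ≠ (σ n).2.2.2 := by
    intro n
    induction n with
    | zero => intro h _; exact absurd rfl h
    | succ n ih => rw [hsucc]; exact BakeryAux.step3_inv _ _ ih
  by_contra hcon
  push_neg at hcon
  have H : ∀ n, i ≤ n → (σ n).2.1 = ProcState.W := by
    intro n hn
    induction n, hn using Nat.le_induction with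
    | base => exact hWi
    | succ k hk ih =>
      rcases BakeryAux.step3_s2 (es k) (σ k) ih with h | h
      · rw [hsucc]; exact h
      · exact absurd ((hsucc k).symm ▸ h) (hcon (k + 1) (by omega))
  have claimU : ∀ n, i ≤ n → (σ n).1 = ProcState.U →
      ∃ m, n ≤ m ∧ (σ m).1 = ProcState.T := by
    intro n hn hUn
    have hstepU : ∀ k, n ≤ k → (σ k).1 = ProcState.U → es k ≠ Event.release1 →
        (σ (k + 1)).1 = ProcState.U := by
      intro k _ hPk hne
      rw [hsucc]
      exact BakeryAux.step3_U1 _ _ hPk hne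
    obtain ⟨m, hnm, hesm, hm⟩ := BakeryAux.until_event es hf Event.release1
      (fun k => (σ k).1 = ProcState.U) n hUn hstepU
    exact ⟨m + 1, by omega, by rw [hsucc, hesm]; exact BakeryAux.step3_release1 _ hm⟩
  have claimA : ∃ n, i ≤ n ∧ ((σ n).1 = ProcState.T ∨
      ((σ n).1 = ProcState.W ∧ (σ n).2.2.2 < (σ n).2.2.1)) := by
    rcases h1 : (σ i).1 with _ | _ | _
    · exact ⟨i, le_rfl, Or.inl h1⟩
    · have hne : (σ i).2.2.1 ≠ (σ i).2.2.2 :=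
        inv i (by rw [h1]; simp) (by rw [H i le_rfl]; simp)
      rcases lt_or_gt_of_ne hne with hlt | hgt
      · have hstepF : ∀ k, i ≤ k →
            (i ≤ k ∧ (σ k).1 = ProcState.W ∧ (σ k).2.2 = (σ i).2.2) →
            es k ≠ Event.take1 →
            (i ≤ k + 1 ∧ (σ (k + 1)).1 = ProcState.W ∧ (σ (k + 1)).2.2 = (σ i).2.2) := by
          rintro k hk ⟨hik, hkW, ht⟩ hne
          obtain ⟨h1', h2'⟩ := BakeryAux.step3_frozen (es k) (σ k) hkW (H k hik) hne
          rw [hsucc]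
          exact ⟨by omega, h1', h2'.trans ht⟩
        obtain ⟨m, him, hesm, hm⟩ := BakeryAux.until_event es hf Event.take1
          (fun k => i ≤ k ∧ (σ k).1 = ProcState.W ∧ (σ k).2.2 = (σ i).2.2)
          i ⟨le_rfl, h1, rfl⟩ hstepF
        obtain ⟨_, hmW, ht⟩ := hm
        have hU1 : (σ (m + 1)).1 = ProcState.U := by
          rw [hsucc, hesm]
          exact BakeryAux.step3_take1_succ _ hmW (by rw [ht]; exact hlt)
        obtain ⟨p, hmp, hpT⟩ := claimU (m + 1) (by omega) hU1
        exact ⟨p, by omega, Or.inl hpT⟩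
      · exact ⟨i, le_rfl, Or.inr ⟨h1, hgt⟩⟩
    · obtain ⟨m, him, hmT⟩ := claimU i le_rfl h1
      exact ⟨m, him, Or.inl hmT⟩
  obtain ⟨n, hin, hKn⟩ := claimA
  have hstepK : ∀ k, n ≤ k →
      (i ≤ k ∧ ((σ k).1 = ProcState.T ∨
        ((σ k).1 = ProcState.W ∧ (σ k).2.2.2 < (σ k).2.2.1))) →
      es k ≠ Event.take2 →
      (i ≤ k + 1 ∧ ((σ (k + 1)).1 = ProcState.T ∨
        ((σ (k + 1)).1 = ProcState.W ∧ (σ (k + 1)).2.2.2 < (σ (k + 1)).2.2.1))) := by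
    rintro k hk ⟨hik, hKk⟩ hne
    refine ⟨by omega, ?_⟩
    rw [hsucc]
    exact BakeryAux.step3_K (es k) (σ k) (H k hik) hKk hne
  obtain ⟨m, hnm, hesm, hm⟩ := BakeryAux.until_event es hf Event.take2
    (fun k => i ≤ k ∧ ((σ k).1 = ProcState.T ∨
      ((σ k).1 = ProcState.W ∧ (σ k).2.2.2 < (σ k).2.2.1)))
    n ⟨hin, hKn⟩ hstepK
  obtain ⟨him, hKm⟩ := hm
  have : (σ (m + 1)).2.1 = ProcState.U := by
    rw [hsucc, hesm]
    exact BakeryAux.step3_take2_succ _ (H m him)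
      (hKm.imp id (fun h => h.2))
  exact hcon (m + 1) (by omega) this
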